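/- Let T > 0 and p ∈ [0, 1/2). There exists a constant C > 0, independent of N, such that for every integer N ≥ 2 with h := T/N < 1, Σ_{m≥1} Σ_{k=0}^{N-2} ( λ_m^{1-p} h² + λ_m^{2-p} h³ ) e^{-2 λ_m h (N - k - 1)} ≤ C h^{p + 1/2}. -/

import Mathlib

noncomputable def lam (m : ℕ) : ℝ := (Real.pi * m) ^ 2 / 2

open Real Finset

private lemma lam_pos (m : ℕ) : 0 < lam (m + 1) := by
  unfold lam
  have hpi := Real.pi_pos
  have : (0:ℝ) < ((m:ℝ) + 1) := by positivity
  push_cast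
  positivity

private lemma lam_lb (m : ℕ) : 2 * ((m:ℝ) + 1) ^ 2 ≤ lam (m + 1) := by
  unfold lam
  have h3 : (3:ℝ) ≤ Real.pi := Real.pi_gt_three.le
  have h9 : (9:ℝ) ≤ Real.pi ^ 2 := by nlinarith
  push_cast
  have hsq : (0:ℝ) ≤ ((m:ℝ) + 1) ^ 2 := by positivity
  nlinarith [hsq]

private lemma exp_neg_le_inv {y : ℝ} (hy : 0 < y) : Real.exp (-y) ≤ y⁻¹ := by
  rw [Real.exp_neg]
  exact inv_anti₀ hy (by linarith [Real.add_one_le_exp y])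

private lemma bern {q : ℝ} (hq0 : 0 < q) (hq1 : q ≤ 1) {x : ℝ} (hx : 1 ≤ x) :
    q * x ^ (q - 1) ≤ x ^ q - (x - 1) ^ q := by
  have hx0 : (0:ℝ) < x := lt_of_lt_of_le one_pos hx
  have hb : (-1:ℝ) ≤ -(1 / x) := by
    have h1 : 1 / x ≤ 1 := by rw [div_le_one hx0]; exact hx
    linarith
  have key := rpow_one_add_le_one_add_mul_self hb hq0.le hq1
  have e0 : 1 + -(1 / x) = (x - 1) / x := by field_simp; ring
  have e1 : (x - 1) ^ q = x ^ q * ((x - 1) / x) ^ q := by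
    rw [Real.div_rpow (by linarith) hx0.le]
    rw [mul_div_cancel₀]
    exact (Real.rpow_pos_of_pos hx0 q).ne'
  have e2 : ((x - 1) / x) ^ q ≤ 1 + q * (-(1 / x)) := by rw [← e0]; exact key
  have e3 : x ^ q * (1 + q * (-(1 / x))) = x ^ q - q * x ^ (q - 1) := by
    rw [Real.rpow_sub hx0, Real.rpow_one]
    field_simp
    ring
  have e4 : (x - 1) ^ q ≤ x ^ q - q * x ^ (q - 1) := by
    rw [e1, ← e3]
    exact mul_le_mul_of_nonneg_left e2 (Real.rpow_nonneg hx0.le q)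
  linarith

private lemma head_sum {q : ℝ} (hq0 : 0 < q) (hq1 : q ≤ 1) (M : ℕ) :
    ∑ m ∈ range M, ((m:ℝ) + 1) ^ (q - 1) ≤ (M:ℝ) ^ q / q := by
  rw [le_div_iff₀ hq0]
  have key : ∀ m ∈ range M, q * (((m:ℝ) + 1) ^ (q - 1)) ≤
      (((m + 1 : ℕ)):ℝ) ^ q - ((m : ℕ):ℝ) ^ q := by
    intro m _
    have hx : (1:ℝ) ≤ (m:ℝ) + 1 := by have := Nat.cast_nonneg (α := ℝ) m; linarith
    have := bern hq0 hq1 hx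
    have hx1 : ((m:ℝ) + 1) - 1 = (m:ℝ) := by ring
    rw [hx1] at this
    push_cast
    linarith
  calc (∑ m ∈ range M, ((m:ℝ) + 1) ^ (q - 1)) * q
      = ∑ m ∈ range M, q * (((m:ℝ) + 1) ^ (q - 1)) := by
        rw [Finset.sum_mul]; exact Finset.sum_congr rfl fun _ _ => by ring
    _ ≤ ∑ m ∈ range M, ((((m + 1 : ℕ)):ℝ) ^ q - ((m : ℕ):ℝ) ^ q) := Finset.sum_le_sum key
    _ = ((M : ℕ):ℝ) ^ q - ((0 : ℕ):ℝ) ^ q := Finset.sum_range_sub (fun i => ((i : ℕ):ℝ) ^ q) M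
    _ ≤ (M:ℝ) ^ q := by
        simp [Real.zero_rpow hq0.ne']

private lemma tele_eq (M : ℕ) :
    ∀ n, M ≤ n → ∑ m ∈ Finset.Ico M n, (1 / (m:ℝ) - 1 / ((m:ℝ) + 1)) = 1 / (M:ℝ) - 1 / (n:ℝ) := by
  intro n hn
  induction n, hn using Nat.le_induction with
  | base => simp
  | succ n hn ih =>
    rw [Finset.sum_Ico_succ_top hn, ih]
    push_cast
    ring

private lemma tail_sum (M n : ℕ) :
    ∑ m ∈ Finset.Ico M n, (1 / (m:ℝ) - 1 / ((m:ℝ) + 1)) ≤ 1 / (M:ℝ) := by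
  rcases le_or_gt M n with hMn | hMn
  · rw [tele_eq M n hMn]
    have : (0:ℝ) ≤ 1 / (n:ℝ) := by positivity
    linarith
  · rw [Finset.Ico_eq_empty (by omega)]
    simp only [Finset.sum_empty]
    positivity

private lemma inner_bound {p h : ℝ} (h0 : 0 < h) (m N : ℕ) (hN : 2 ≤ N) :
    ∑ k ∈ Finset.range (N - 1),
        (lam (m + 1) ^ (1 - p) * h ^ 2 + lam (m + 1) ^ (2 - p) * h ^ 3) *
          Real.exp (-2 * lam (m + 1) * h * ((N : ℝ) - k - 1)) ≤
      3 * lam (m + 1) ^ (-p) * h * Real.exp (-(lam (m + 1) * h) / 2) := by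
  set L := lam (m + 1) with hLdef
  have hL : 0 < L := lam_pos m
  set a := L * h with hadef
  have ha : 0 < a := mul_pos hL h0
  set r := Real.exp (-a) with hrdef
  have hr0 : 0 < r := Real.exp_pos _
  have hr1 : r < 1 := Real.exp_lt_one_iff.mpr (by linarith)
  have hr2 : r ^ 2 = Real.exp (-2 * a) := by
    rw [hrdef, sq, ← Real.exp_add]
    congr 1
    ring
  have hsum : ∑ k ∈ Finset.range (N - 1), Real.exp (-2 * L * h * ((N : ℝ) - k - 1))
      = ∑ k ∈ Finset.range (N - 1), (r ^ 2) ^ (k + 1) := by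
    rw [← Finset.sum_range_reflect (fun k => (r ^ 2) ^ (k + 1)) (N - 1)]
    refine Finset.sum_congr rfl fun k hk => ?_
    rw [Finset.mem_range] at hk
    have hj : N - 1 - 1 - k + 1 = N - 1 - k := by omega
    have hjcast : ((N - 1 - k : ℕ) : ℝ) = (N : ℝ) - 1 - k := by
      have e : N - 1 - k = N - (1 + k) := by omega
      rw [e, Nat.cast_sub (by omega)]
      push_cast
      ring
    rw [hj, hr2, ← Real.exp_nat_mul]
    congr 1
    rw [hjcast, hadef]
    ring
  have hterm : ∀ k ∈ Finset.range (N - 1), (r ^ 2) ^ (k + 1) ≤ r * r ^ (k + 1) := by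
    intro k _
    have h1 : (r ^ 2) ^ (k + 1) = r ^ (k + 1) * r ^ (k + 1) := by ring
    have h2 : r ^ (k + 1) ≤ r := by
      have := pow_le_pow_of_le_one hr0.le hr1.le (show 1 ≤ k + 1 by omega)
      simpa using this
    rw [h1]
    exact mul_le_mul_of_nonneg_right h2 (pow_nonneg hr0.le _)
  have hgeom : ∑ k ∈ Finset.range (N - 1), r * r ^ (k + 1) ≤ r ^ 2 * (1 / (1 - r)) := by
    have e : ∑ k ∈ Finset.range (N - 1), r * r ^ (k + 1)
        = r ^ 2 * ∑ k ∈ Finset.range (N - 1), r ^ k := by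
      rw [Finset.mul_sum]
      exact Finset.sum_congr rfl fun _ _ => by ring
    rw [e]
    have hg : ∑ k ∈ Finset.range (N - 1), r ^ k ≤ 1 / (1 - r) := by
      rw [geom_sum_eq hr1.ne (N - 1)]
      have e2 : (r ^ (N - 1) - 1) / (r - 1) = (1 - r ^ (N - 1)) / (1 - r) := by
        rw [div_eq_div_iff (by linarith) (by linarith)]
        ring
      rw [e2]
      rw [div_le_div_iff₀ (by linarith) (by linarith)]
      nlinarith [pow_nonneg hr0.le (N - 1)]
    exact mul_le_mul_of_nonneg_left hg (by positivity)
  have hra : r ^ 2 * (1 / (1 - r)) ≤ r / a := by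
    have h1 := Real.add_one_le_exp a
    have h2 : r * Real.exp a = 1 := by
      rw [hrdef, ← Real.exp_add]
      simp
    have h3 : r * (a + 1) ≤ r * Real.exp a := mul_le_mul_of_nonneg_left h1 hr0.le
    have h4 : r * (a + 1) ≤ 1 := h3.trans_eq h2
    have key : a * r ≤ 1 - r := by nlinarith
    rw [mul_one_div, div_le_div_iff₀ (by linarith) ha]
    nlinarith [mul_le_mul_of_nonneg_left key hr0.le]
  have hc : L ^ (1 - p) * h ^ 2 + L ^ (2 - p) * h ^ 3 = L ^ (-p) * (a * h * (1 + a)) := by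
    have e1 : L ^ (1 - p) = L ^ (-p) * L := by
      rw [show (1:ℝ) - p = -p + 1 by ring, Real.rpow_add hL, Real.rpow_one]
    have e2 : L ^ (2 - p) = L ^ (-p) * L * L := by
      rw [show (2:ℝ) - p = -p + 1 + 1 by ring, Real.rpow_add hL, Real.rpow_add hL, Real.rpow_one]
    rw [e1, e2, hadef]
    ring
  have hbd : (1 + a) * r ≤ 3 * Real.exp (-a / 2) := by
    have hsplit : r = Real.exp (-a / 2) * Real.exp (-a / 2) := by
      rw [← Real.exp_add, show -a / 2 + -a / 2 = -a from by ring, hrdef]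
    have h1 := Real.add_one_le_exp (a / 2)
    have h2 : Real.exp (-a / 2) * Real.exp (a / 2) = 1 := by
      rw [← Real.exp_add, show -a / 2 + a / 2 = 0 from by ring, Real.exp_zero]
    have h3 : (1 + a) * Real.exp (-a / 2) ≤ 3 := by
      nlinarith [h2, Real.exp_pos (-a / 2),
        mul_nonneg (by linarith : (0:ℝ) ≤ Real.exp (a / 2) - 1 - a / 2)
          (Real.exp_pos (-a / 2)).le]
    calc (1 + a) * r = ((1 + a) * Real.exp (-a / 2)) * Real.exp (-a / 2) := by
          rw [hsplit]; ring
      _ ≤ 3 * Real.exp (-a / 2) :=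
          mul_le_mul_of_nonneg_right h3 (Real.exp_pos _).le
  calc ∑ k ∈ Finset.range (N - 1),
        (L ^ (1 - p) * h ^ 2 + L ^ (2 - p) * h ^ 3) *
          Real.exp (-2 * L * h * ((N : ℝ) - k - 1))
      = (L ^ (-p) * (a * h * (1 + a))) *
          ∑ k ∈ Finset.range (N - 1), Real.exp (-2 * L * h * ((N : ℝ) - k - 1)) := by
        rw [← Finset.mul_sum, hc]
    _ ≤ (L ^ (-p) * (a * h * (1 + a))) * (r / a) := by
        refine mul_le_mul_of_nonneg_left ?_ (by positivity)
        rw [hsum]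
        exact le_trans (Finset.sum_le_sum hterm) (le_trans hgeom hra)
    _ = (L ^ (-p) * h) * ((1 + a) * r) := by
        field_simp
    _ ≤ (L ^ (-p) * h) * (3 * Real.exp (-a / 2)) :=
        mul_le_mul_of_nonneg_left hbd (by positivity)
    _ = 3 * L ^ (-p) * h * Real.exp (-a / 2) := by ring

set_option maxHeartbeats 1000000 in
/-- Double-series bound controlling the terms `I` and `J` of the weak-error
decomposition. -/
theorem stmt_16 (T : ℝ) (hT : 0 < T) (p : ℝ) (hp0 : 0 ≤ p) (hp : p < 1 / 2) :
    ∃ C : ℝ, 0 < C ∧ ∀ N : ℕ, 2 ≤ N → T / N < 1 →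
      ∑' m : ℕ, ∑ k ∈ Finset.range (N - 1),
          (lam (m + 1) ^ (1 - p) * (T / N) ^ 2 + lam (m + 1) ^ (2 - p) * (T / N) ^ 3) *
            Real.exp (-2 * lam (m + 1) * (T / N) * ((N : ℝ) - k - 1)) ≤
        C * (T / N) ^ (p + 1 / 2) := by
  have hq0 : (0:ℝ) < 1 - 2 * p := by linarith
  refine ⟨9 / (1 - 2 * p), div_pos (by norm_num) hq0, ?_⟩
  intro N hN hh1
  have hN0 : (0:ℝ) < (N:ℝ) := by
    have : 0 < N := by omega
    exact_mod_cast this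
  set h : ℝ := T / N with hdef
  have h0 : 0 < h := div_pos hT hN0
  set q : ℝ := 1 - 2 * p with hqdef
  have hq1 : q ≤ 1 := by rw [hqdef]; linarith
  have hq1' : q - 1 ≤ 0 := by linarith
  set x : ℝ := h ^ (-(1/2) : ℝ) with hxdef
  have hx0 : 0 < x := Real.rpow_pos_of_pos h0 _
  have hx1 : 1 ≤ x := Real.one_le_rpow_of_pos_of_le_one_of_nonpos h0 hh1.le (by norm_num)
  set M : ℕ := ⌈x⌉₊ with hMdef
  have hM1 : 1 ≤ M := Nat.one_le_ceil_iff.mpr hx0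
  have hxM : x ≤ (M:ℝ) := Nat.le_ceil x
  have hM2x : (M:ℝ) ≤ 2 * x := by
    have h' := Nat.ceil_lt_add_one hx0.le
    rw [← hMdef] at h'
    linarith
  have hM0 : (0:ℝ) < (M:ℝ) := lt_of_lt_of_le hx0 hxM
  have hxq1 : x ^ (q - 1) = h ^ p := by
    rw [hxdef, ← Real.rpow_mul h0.le]
    congr 1
    rw [hqdef]
    ring
  have hxq : x ^ q = h ^ (p - 1/2) := by
    rw [hxdef, ← Real.rpow_mul h0.le]
    congr 1
    rw [hqdef]
    ring
  have hxinv : x⁻¹ = h ^ ((1:ℝ)/2) := by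
    rw [hxdef, Real.rpow_neg h0.le, inv_inv]
  apply tsum_le_of_sum_le'
  · exact mul_nonneg (div_pos (by norm_num) hq0).le (Real.rpow_nonneg h0.le _)
  intro s
  obtain ⟨n, hsn⟩ := s.exists_nat_subset_range
  have hFG : ∀ m : ℕ, ∑ k ∈ Finset.range (N - 1),
      (lam (m + 1) ^ (1 - p) * h ^ 2 + lam (m + 1) ^ (2 - p) * h ^ 3) *
        Real.exp (-2 * lam (m + 1) * h * ((N : ℝ) - k - 1)) ≤
      3 * h * (((m:ℝ) + 1) ^ (q - 1) * Real.exp (-(((m:ℝ) + 1) ^ 2 * h))) := by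
    intro m
    refine (inner_bound h0 m N hN).trans ?_
    have hL := lam_pos m
    have hlb := lam_lb m
    have hm2 : (0:ℝ) < ((m:ℝ) + 1) ^ 2 := by positivity
    have b1 : lam (m + 1) ^ (-p) ≤ ((m:ℝ) + 1) ^ (q - 1) := by
      have step1 : lam (m + 1) ^ (-p) ≤ (((m:ℝ) + 1) ^ 2) ^ (-p) :=
        Real.rpow_le_rpow_of_nonpos hm2 (by nlinarith) (by linarith)
      refine step1.trans_eq ?_
      rw [← Real.rpow_natCast ((m:ℝ) + 1) 2, ← Real.rpow_mul (by positivity)]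
      congr 1
      rw [hqdef]
      push_cast
      ring
    have b2 : Real.exp (-(lam (m + 1) * h) / 2) ≤ Real.exp (-(((m:ℝ) + 1) ^ 2 * h)) := by
      rw [Real.exp_le_exp]
      nlinarith
    calc 3 * lam (m + 1) ^ (-p) * h * Real.exp (-(lam (m + 1) * h) / 2)
        = 3 * h * (lam (m + 1) ^ (-p) * Real.exp (-(lam (m + 1) * h) / 2)) := by ring
      _ ≤ 3 * h * (((m:ℝ) + 1) ^ (q - 1) * Real.exp (-(((m:ℝ) + 1) ^ 2 * h))) := by
          refine mul_le_mul_of_nonneg_left ?_ (by positivity)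
          exact mul_le_mul b1 b2 (Real.exp_pos _).le (Real.rpow_nonneg (by positivity) _)
  have core : ∑ m ∈ Finset.range n,
      ((m:ℝ) + 1) ^ (q - 1) * Real.exp (-(((m:ℝ) + 1) ^ 2 * h))
      ≤ (M:ℝ) ^ q / q + (h ^ p / h) * (1 / M) := by
    have hptw : ∀ m ∈ Finset.range n,
        ((m:ℝ) + 1) ^ (q - 1) * Real.exp (-(((m:ℝ) + 1) ^ 2 * h)) ≤
        (if m < M then ((m:ℝ) + 1) ^ (q - 1) else 0) +
        (if M ≤ m then (h ^ p / h) * (1 / (m:ℝ) - 1 / ((m:ℝ) + 1)) else 0) := by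
      intro m _
      by_cases hm : m < M
      · rw [if_pos hm, if_neg (by omega)]
        have e1 : Real.exp (-(((m:ℝ) + 1) ^ 2 * h)) ≤ 1 := by
          rw [Real.exp_le_one_iff]
          have : (0:ℝ) ≤ ((m:ℝ) + 1) ^ 2 * h := by positivity
          linarith
        have h2 := mul_le_mul_of_nonneg_left e1
          (Real.rpow_nonneg (by positivity : (0:ℝ) ≤ (m:ℝ) + 1) (q - 1))
        simpa using h2
      · rw [if_neg hm, if_pos (by omega), zero_add]
        push_neg at hm
        have hm1 : (1:ℝ) ≤ (m:ℝ) := by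
          have : (1:ℕ) ≤ m := le_trans hM1 hm
          exact_mod_cast this
        have hmM : (M:ℝ) ≤ (m:ℝ) := by exact_mod_cast hm
        have f1 : ((m:ℝ) + 1) ^ (q - 1) ≤ h ^ p := by
          rw [← hxq1]
          exact Real.rpow_le_rpow_of_nonpos hx0 (by linarith) hq1'
        have f2 : Real.exp (-(((m:ℝ) + 1) ^ 2 * h)) ≤ (((m:ℝ) + 1) ^ 2 * h)⁻¹ :=
          exp_neg_le_inv (by positivity)
        have f3 : (((m:ℝ) + 1) ^ 2 * h)⁻¹ ≤ (1/h) * (1 / (m:ℝ) - 1 / ((m:ℝ) + 1)) := by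
          have hmne : (m:ℝ) ≠ 0 := by linarith
          have hm1ne : (m:ℝ) + 1 ≠ 0 := by linarith
          have e : (1/h) * (1 / (m:ℝ) - 1 / ((m:ℝ) + 1)) = ((m:ℝ) * ((m:ℝ) + 1) * h)⁻¹ := by
            rw [mul_inv, mul_inv]
            field_simp
            ring
          rw [e]
          exact inv_anti₀ (by positivity) (by nlinarith)
        calc ((m:ℝ) + 1) ^ (q - 1) * Real.exp (-(((m:ℝ) + 1) ^ 2 * h))
            ≤ (h ^ p) * ((1/h) * (1 / (m:ℝ) - 1 / ((m:ℝ) + 1))) :=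
              mul_le_mul f1 (f2.trans f3) (Real.exp_pos _).le (Real.rpow_nonneg h0.le p)
          _ = (h ^ p / h) * (1 / (m:ℝ) - 1 / ((m:ℝ) + 1)) := by ring
    refine le_trans (Finset.sum_le_sum hptw) ?_
    rw [Finset.sum_add_distrib]
    have sumA : ∑ m ∈ Finset.range n, (if m < M then ((m:ℝ) + 1) ^ (q - 1) else 0)
        ≤ (M:ℝ) ^ q / q := by
      rw [← Finset.sum_filter]
      refine le_trans (Finset.sum_le_sum_of_subset_of_nonneg ?_ ?_) (head_sum hq0 hq1 M)
      · intro m hmm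
        simp only [Finset.mem_filter, Finset.mem_range] at hmm ⊢
        exact hmm.2
      · intro m _ _
        positivity
    have sumB : ∑ m ∈ Finset.range n,
        (if M ≤ m then (h ^ p / h) * (1 / (m:ℝ) - 1 / ((m:ℝ) + 1)) else 0)
        ≤ (h ^ p / h) * (1 / M) := by
      rw [← Finset.sum_filter]
      have hfe : (Finset.range n).filter (fun m => M ≤ m) = Finset.Ico M n := by
        ext m
        simp [Finset.mem_Ico, and_comm]
      rw [hfe, ← Finset.mul_sum]
      exact mul_le_mul_of_nonneg_left (tail_sum M n) (by positivity)
    exact add_le_add sumA sumB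
  have hpow1 : h ^ (p + 1/2) = h ^ (p - 1/2) * h := by
    rw [show p + 1/2 = (p - 1/2) + 1 from by ring, Real.rpow_add h0, Real.rpow_one]
  have hpow2 : h ^ p * h ^ ((1:ℝ)/2) = h ^ (p + 1/2) := by
    rw [← Real.rpow_add h0]
  have hMinv : 1 / (M:ℝ) ≤ h ^ ((1:ℝ)/2) := by
    rw [← hxinv, ← one_div]
    exact one_div_le_one_div_of_le hx0 hxM
  have Mq : (M:ℝ) ^ q ≤ 2 * h ^ (p - 1/2) := by
    calc (M:ℝ) ^ q ≤ (2 * x) ^ q := Real.rpow_le_rpow (Nat.cast_nonneg M) hM2x hq0.le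
      _ = 2 ^ q * x ^ q := Real.mul_rpow (by norm_num) hx0.le
      _ ≤ 2 * x ^ q := by
          have h2q : (2:ℝ) ^ q ≤ 2 := by
            calc (2:ℝ) ^ q ≤ (2:ℝ) ^ (1:ℝ) := Real.rpow_le_rpow_of_exponent_le one_le_two hq1
              _ = 2 := Real.rpow_one 2
          exact mul_le_mul_of_nonneg_right h2q (Real.rpow_nonneg hx0.le q)
      _ = 2 * h ^ (p - 1/2) := by rw [hxq]
  have piece1 : 3 * h * ((M:ℝ) ^ q / q) ≤ 6 / q * h ^ (p + 1/2) := by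
    have hnum : (M:ℝ) ^ q / q ≤ (2 * h ^ (p - 1/2)) / q := by gcongr
    calc 3 * h * ((M:ℝ) ^ q / q) ≤ 3 * h * ((2 * h ^ (p - 1/2)) / q) :=
          mul_le_mul_of_nonneg_left hnum (by positivity)
      _ = 6 / q * (h ^ (p - 1/2) * h) := by ring
      _ = 6 / q * h ^ (p + 1/2) := by rw [← hpow1]
  have piece2 : 3 * h * ((h ^ p / h) * (1 / M)) ≤ 3 * h ^ (p + 1/2) := by
    have e : 3 * h * ((h ^ p / h) * (1 / (M:ℝ))) = 3 * (h ^ p) * (1 / (M:ℝ)) := by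
      field_simp
    calc 3 * h * ((h ^ p / h) * (1 / (M:ℝ))) = 3 * (h ^ p) * (1 / (M:ℝ)) := e
      _ ≤ 3 * (h ^ p) * (h ^ ((1:ℝ)/2)) := by
          refine mul_le_mul_of_nonneg_left hMinv (by positivity)
      _ = 3 * h ^ (p + 1/2) := by rw [mul_assoc, hpow2]
  calc ∑ m ∈ s, ∑ k ∈ Finset.range (N - 1),
        (lam (m + 1) ^ (1 - p) * h ^ 2 + lam (m + 1) ^ (2 - p) * h ^ 3) *
          Real.exp (-2 * lam (m + 1) * h * ((N : ℝ) - k - 1))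
      ≤ ∑ m ∈ s, 3 * h * (((m:ℝ) + 1) ^ (q - 1) * Real.exp (-(((m:ℝ) + 1) ^ 2 * h))) :=
        Finset.sum_le_sum fun m _ => hFG m
    _ ≤ ∑ m ∈ Finset.range n,
          3 * h * (((m:ℝ) + 1) ^ (q - 1) * Real.exp (-(((m:ℝ) + 1) ^ 2 * h))) :=
        Finset.sum_le_sum_of_subset_of_nonneg hsn (fun m _ _ => by positivity)
    _ = 3 * h * ∑ m ∈ Finset.range n,
          (((m:ℝ) + 1) ^ (q - 1) * Real.exp (-(((m:ℝ) + 1) ^ 2 * h))) := by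
        rw [Finset.mul_sum]
    _ ≤ 3 * h * ((M:ℝ) ^ q / q + (h ^ p / h) * (1 / M)) :=
        mul_le_mul_of_nonneg_left core (by positivity)
    _ = 3 * h * ((M:ℝ) ^ q / q) + 3 * h * ((h ^ p / h) * (1 / M)) := by ring
    _ ≤ 6 / q * h ^ (p + 1/2) + 3 * h ^ (p + 1/2) := add_le_add piece1 piece2
    _ ≤ 9 / q * h ^ (p + 1/2) := by
        have h3q : 3 ≤ 3 / q := by
          rw [le_div_iff₀ hq0]
          linarith
        have hX : (0:ℝ) ≤ h ^ (p + 1/2) := Real.rpow_nonneg h0.le _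
        have hstep : 3 * h ^ (p + 1/2) ≤ 3 / q * h ^ (p + 1/2) :=
          mul_le_mul_of_nonneg_right h3q hX
        have hsum9 : 6 / q * h ^ (p + 1/2) + 3 / q * h ^ (p + 1/2) = 9 / q * h ^ (p + 1/2) := by
          ring
        linarith
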